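/- For every uncountable regular cardinal κ, the ordinal κ can be partitioned into κ many pairwise disjoint stationary subsets of κ. -/

import Mathlib

open Cardinal Set

/-- `C` is a club (closed unbounded) subset of the ordinal `γ`: it consists of ordinals
below `γ`, its supremum is `γ`, and it is closed under suprema of its nonempty subsets
whose supremum is below `γ`. -/
def IsClubIn (γ : Ordinal) (C : Set Ordinal) : Prop :=
  C ⊆ Set.Iio γ ∧ sSup C = γ ∧
    ∀ s ⊆ C, s.Nonempty → sSup s < γ → sSup s ∈ C

/-- `S` is stationary in `γ`: it meets every club in `γ`. -/
def IsStatIn (γ : Ordinal) (S : Set Ordinal) : Prop :=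
  ∀ C : Set Ordinal, IsClubIn γ C → (S ∩ C).Nonempty

/-- Every uncountable regular cardinal `κ` can be partitioned into `κ` many pairwise
disjoint stationary subsets of `κ`. -/
lemma sSup_eq_of_unbounded {γ : Ordinal} {X : Set Ordinal} (hX : X ⊆ Set.Iio γ)
    (h : ∀ β < γ, ∃ x ∈ X, β < x) : sSup X = γ := by
  refine le_antisymm (csSup_le' fun x hx => (hX hx).le) ?_
  by_contra hlt
  obtain ⟨x, hxX, hx⟩ := h _ (not_le.1 hlt)
  exact absurd (le_csSup ⟨γ, fun y hy => (hX hy).le⟩ hxX) (not_le.2 hx)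

lemma club_unbounded {γ : Ordinal} {C : Set Ordinal} (h : IsClubIn γ C) :
    ∀ β < γ, ∃ c ∈ C, β < c := by
  intro β hβ
  by_contra hc
  push_neg at hc
  exact absurd (h.2.1 ▸ csSup_le' hc) (not_le.2 hβ)

lemma clubIn_Iio {γ : Ordinal} (hγ : Order.IsSuccLimit γ) : IsClubIn γ (Set.Iio γ) := by
  refine ⟨le_refl _, sSup_eq_of_unbounded le_rfl ?_, fun s _ _ h => h⟩
  intro β hβ
  exact ⟨β + 1, by rw [Ordinal.add_one_eq_succ]; exact hγ.succ_lt hβ, by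
    rw [Ordinal.add_one_eq_succ]; exact Order.lt_succ β⟩

lemma stat_mono {γ : Ordinal} {S T : Set Ordinal} (hST : S ⊆ T) (h : IsStatIn γ S) :
    IsStatIn γ T := fun C hC => (h C hC).mono (Set.inter_subset_inter_left _ hST)

lemma stat_nonempty {γ : Ordinal} {S : Set Ordinal} (hγ : Order.IsSuccLimit γ) (h : IsStatIn γ S) :
    S.Nonempty := ((h _ (clubIn_Iio hγ)).mono (Set.inter_subset_left)).mono le_rfl

lemma exists_seq_of_cof_omega {α : Ordinal} (h : α.cof = ℵ₀) :
    ∃ f : ℕ → Ordinal, (∀ n, f n < α) ∧ sSup (Set.range f) = α := by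
  have hlim : Order.IsSuccLimit α := Ordinal.aleph0_le_cof.1 h.ge
  obtain ⟨ι, g, hg, hcard⟩ := Ordinal.exists_lsub_cof α
  rw [h] at hcard
  have hcnt : Countable ι := Cardinal.mk_le_aleph0_iff.1 hcard.le
  have hne : Nonempty ι := Cardinal.mk_ne_zero_iff.1 (by rw [hcard]; exact Cardinal.aleph0_ne_zero)
  obtain ⟨s, hs⟩ := exists_surjective_nat ι
  refine ⟨g ∘ s, fun n => hg ▸ Ordinal.lt_lsub g (s n), ?_⟩
  have hb : BddAbove (Set.range (g ∘ s)) := Ordinal.bddAbove_range _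
  refine le_antisymm (csSup_le' ?_) ?_
  · rintro x ⟨n, rfl⟩
    exact (hg ▸ Ordinal.lt_lsub g (s n)).le
  · by_contra hlt
    rw [not_le] at hlt
    have h1 : sSup (Set.range (g ∘ s)) + 1 < α := by
      rw [Ordinal.add_one_eq_succ]; exact hlim.succ_lt hlt
    rw [← hg, Ordinal.lt_lsub_iff] at h1
    obtain ⟨i, hi⟩ := h1
    obtain ⟨n, rfl⟩ := hs i
    have : g (s n) ≤ sSup (Set.range (g ∘ s)) := le_csSup hb ⟨n, rfl⟩
    have h2 : sSup (Set.range (g ∘ s)) < sSup (Set.range (g ∘ s)) + 1 := by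
      rw [Ordinal.add_one_eq_succ]; exact Order.lt_succ _
    exact absurd (hi.trans this) (not_le.2 h2)

section
variable {κ : Cardinal} (hreg : κ.IsRegular) (hunc : ℵ₀ < κ)
include hreg hunc

lemma sup_nat_lt (f : ℕ → Ordinal) (hf : ∀ n, f n < κ.ord) :
    sSup (Set.range f) < κ.ord := by
  have : iSup f < κ.ord := by
    refine Ordinal.iSup_lt_ord_lift ?_ hf
    rw [Cardinal.mk_nat, Cardinal.lift_aleph0, hreg.cof_eq]
    exact hunc
  exact this

lemma bound_lt_ord {γ : Ordinal} (hγ : γ < κ.ord) (f : Ordinal → Ordinal)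
    (hf : ∀ δ < γ, f δ < κ.ord) : ∃ b < κ.ord, ∀ δ < γ, f δ ≤ b := by
  refine ⟨Ordinal.bsup γ (fun δ _ => f δ), ?_, fun δ h => Ordinal.le_bsup _ δ h⟩
  refine Ordinal.bsup_lt_ord ?_ (fun i h => hf i h)
  rw [hreg.cof_eq]
  exact Cardinal.lt_ord.1 hγ

lemma chain_sup {c : ℕ → Ordinal} (hmono : ∀ k, c k < c (k + 1)) (hlt : ∀ k, c k < κ.ord) :
    sSup (Set.range c) < κ.ord ∧ (∀ k, c k < sSup (Set.range c)) ∧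
      (sSup (Set.range c)).cof = ℵ₀ := by
  have hb : BddAbove (Set.range c) := Ordinal.bddAbove_range _
  have hsup : sSup (Set.range c) < κ.ord := sup_nat_lt hreg hunc c hlt
  have hck : ∀ k, c k < sSup (Set.range c) :=
    fun k => (hmono k).trans_le (le_csSup hb ⟨k + 1, rfl⟩)
  refine ⟨hsup, hck, ?_⟩
  have hlim : Order.IsSuccLimit (sSup (Set.range c)) := by
    refine Ordinal.isSuccLimit_iff.2 ⟨fun h0 => ?_, Order.isSuccPrelimit_iff_succ_lt.2 fun a ha => ?_⟩
    · exact absurd (h0 ▸ hck 0) not_lt_zero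
    · obtain ⟨x, ⟨k, rfl⟩, hx⟩ := exists_lt_of_lt_csSup (Set.range_nonempty c) ha
      exact (Order.succ_le_of_lt hx).trans_lt (hck k)
  refine le_antisymm ?_ (Ordinal.aleph0_le_cof.2 hlim)
  have := Ordinal.cof_iSup_le_lift (f := c) hck
  rwa [Cardinal.mk_nat, Cardinal.lift_aleph0] at this

lemma meet_countable (Cs : ℕ → Set Ordinal) (hC : ∀ n, IsClubIn κ.ord (Cs n))
    {β : Ordinal} (hβ : β < κ.ord) :
    ∃ α, α < κ.ord ∧ β < α ∧ α.cof = ℵ₀ ∧ ∀ n, α ∈ Cs n := by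
  have hΓlim : Order.IsSuccLimit κ.ord := Cardinal.isSuccLimit_ord hunc.le
  have hstep : ∀ x, ∃ y, x < κ.ord →
      (x < y ∧ y < κ.ord ∧ ∀ n, ∃ z ∈ Cs n, x < z ∧ z ≤ y) := by
    intro x
    by_cases hx : x < κ.ord
    · choose z hz hxz using fun n => club_unbounded (hC n) x hx
      refine ⟨max (sSup (Set.range z)) (x + 1), fun _ => ⟨?_, ?_, ?_⟩⟩
      · calc x < x + 1 := by rw [Ordinal.add_one_eq_succ]; exact Order.lt_succ x
          _ ≤ _ := le_max_right _ _
      · refine max_lt (sup_nat_lt hreg hunc z fun n => (hC n).1 (hz n)) ?_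
        rw [Ordinal.add_one_eq_succ]; exact hΓlim.succ_lt hx
      · exact fun n => ⟨z n, hz n, hxz n,
          (le_csSup (Ordinal.bddAbove_range _) ⟨n, rfl⟩).trans (le_max_left _ _)⟩
    · exact ⟨0, fun h => absurd h hx⟩
  choose G hG using hstep
  set c : ℕ → Ordinal := fun k => Nat.rec (β + 1) (fun _ ih => G ih) k with hc
  have hc0 : c 0 = β + 1 := rfl
  have hcs : ∀ k, c (k + 1) = G (c k) := fun k => rfl
  have hcΓ : ∀ k, c k < κ.ord := by
    intro k
    induction k with
    | zero => rw [hc0, Ordinal.add_one_eq_succ]; exact hΓlim.succ_lt hβ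
    | succ k ih => rw [hcs]; exact (hG _ ih).2.1
  have hmono : ∀ k, c k < c (k + 1) := fun k => by rw [hcs]; exact (hG _ (hcΓ k)).1
  obtain ⟨hsupΓ, hlt_sup, hcof⟩ := chain_sup hreg hunc hmono hcΓ
  refine ⟨sSup (Set.range c), hsupΓ, ?_, hcof, ?_⟩
  · calc β < β + 1 := by rw [Ordinal.add_one_eq_succ]; exact Order.lt_succ β
      _ = c 0 := hc0.symm
      _ < _ := hlt_sup 0
  · intro n
    choose w hw hcw hwc using fun k => (hG (c k) (hcΓ k)).2.2 n
    have hwb : BddAbove (Set.range w) := Ordinal.bddAbove_range _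
    have hcb : BddAbove (Set.range c) := Ordinal.bddAbove_range _
    have hsup_eq : sSup (Set.range w) = sSup (Set.range c) := by
      refine le_antisymm (csSup_le' ?_) (csSup_le' ?_)
      · rintro x ⟨k, rfl⟩
        exact ((hwc k).trans (hcs k).symm.le).trans (le_csSup hcb ⟨k + 1, rfl⟩)
      · rintro x ⟨k, rfl⟩
        exact (hcw k).le.trans (le_csSup hwb ⟨k, rfl⟩)
    have := (hC n).2.2 (Set.range w) (by rintro x ⟨k, rfl⟩; exact hw k) ⟨w 0, ⟨0, rfl⟩⟩
      (hsup_eq ▸ hsupΓ)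
    rwa [hsup_eq] at this


lemma diag_club (Cs : Ordinal → Set Ordinal) (hC : ∀ ξ, IsClubIn κ.ord (Cs ξ)) :
    IsClubIn κ.ord {α | α < κ.ord ∧ ∀ ξ < α, α ∈ Cs ξ} := by
  have hΓlim : Order.IsSuccLimit κ.ord := Cardinal.isSuccLimit_ord hunc.le
  refine ⟨fun α hα => hα.1, ?_, ?_⟩
  · -- unbounded
    refine sSup_eq_of_unbounded (fun α hα => hα.1) ?_
    intro β hβ
    have hstep : ∀ x, ∃ y, x < κ.ord →
        (x < y ∧ y < κ.ord ∧ ∀ ξ < x, ∃ z ∈ Cs ξ, x < z ∧ z ≤ y) := by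
      intro x
      by_cases hx : x < κ.ord
      · choose z hz hxz using fun ξ (hξ : ξ < x) => club_unbounded (hC ξ) x hx
        have hbs : Ordinal.bsup x z < κ.ord := by
          refine Ordinal.bsup_lt_ord ?_ (fun ξ hξ => (hC ξ).1 (hz ξ hξ))
          rw [hreg.cof_eq]; exact Cardinal.lt_ord.1 hx
        refine ⟨max (Ordinal.bsup x z) (x + 1), fun _ => ⟨?_, ?_, ?_⟩⟩
        · calc x < x + 1 := by rw [Ordinal.add_one_eq_succ]; exact Order.lt_succ x
            _ ≤ _ := le_max_right _ _
        · refine max_lt hbs ?_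
          rw [Ordinal.add_one_eq_succ]; exact hΓlim.succ_lt hx
        · exact fun ξ hξ => ⟨z ξ hξ, hz ξ hξ, hxz ξ hξ,
            (Ordinal.le_bsup z ξ hξ).trans (le_max_left _ _)⟩
      · exact ⟨0, fun h => absurd h hx⟩
    choose G hG using hstep
    set c : ℕ → Ordinal := fun k => Nat.rec (β + 1) (fun _ ih => G ih) k with hcdef
    have hc0 : c 0 = β + 1 := rfl
    have hcs : ∀ k, c (k + 1) = G (c k) := fun k => rfl
    have hcΓ : ∀ k, c k < κ.ord := by
      intro k
      induction k with
      | zero => rw [hc0, Ordinal.add_one_eq_succ]; exact hΓlim.succ_lt hβ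
      | succ k ih => rw [hcs]; exact (hG _ ih).2.1
    have hmono : ∀ k, c k < c (k + 1) := fun k => by rw [hcs]; exact (hG _ (hcΓ k)).1
    have hsm : StrictMono c := strictMono_nat_of_lt_succ hmono
    obtain ⟨hsupΓ, hlt_sup, _⟩ := chain_sup hreg hunc hmono hcΓ
    have hcb : BddAbove (Set.range c) := Ordinal.bddAbove_range _
    refine ⟨sSup (Set.range c), ⟨hsupΓ, ?_⟩, ?_⟩
    · intro ξ hξ
      obtain ⟨x, ⟨k, rfl⟩, hxk⟩ := exists_lt_of_lt_csSup (Set.range_nonempty c) hξ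
      have hξm : ∀ m, ξ < c (k + m) := fun m => hxk.trans_le (hsm.monotone (Nat.le_add_right k m))
      choose w hw hcw hwc using fun m => (hG (c (k + m)) (hcΓ (k + m))).2.2 ξ (hξm m)
      have hwb : BddAbove (Set.range w) := Ordinal.bddAbove_range _
      have hsup_eq : sSup (Set.range w) = sSup (Set.range c) := by
        refine le_antisymm (csSup_le' ?_) (csSup_le' ?_)
        · rintro x ⟨m, rfl⟩
          exact ((hwc m).trans (hcs (k + m)).symm.le).trans (le_csSup hcb ⟨k + m + 1, rfl⟩)
        · rintro x ⟨m, rfl⟩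
          calc c m ≤ c (k + m) := hsm.monotone (Nat.le_add_left m k)
            _ ≤ w m := (hcw m).le
            _ ≤ _ := le_csSup hwb ⟨m, rfl⟩
      have := (hC ξ).2.2 (Set.range w) (by rintro x ⟨m, rfl⟩; exact hw m) ⟨w 0, ⟨0, rfl⟩⟩
        (hsup_eq ▸ hsupΓ)
      rwa [hsup_eq] at this
    · calc β < β + 1 := by rw [Ordinal.add_one_eq_succ]; exact Order.lt_succ β
        _ = c 0 := hc0.symm
        _ < _ := hlt_sup 0
  · -- closed
    intro s hs hne hsup
    refine ⟨hsup, ?_⟩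
    intro ξ hξ
    have hsb : BddAbove s := ⟨κ.ord, fun x hx => ((hs hx).1).le⟩
    obtain ⟨y, hy, hξy⟩ := exists_lt_of_lt_csSup hne hξ
    set s' := s ∩ Set.Ioi ξ with hs'
    have hsub : s' ⊆ Cs ξ := fun b hb => (hs hb.1).2 ξ hb.2
    have hs'b : BddAbove s' := hsb.mono Set.inter_subset_left
    have heq : sSup s' = sSup s := by
      refine le_antisymm (csSup_le' fun x hx => le_csSup hsb hx.1) (csSup_le' ?_)
      intro x hx
      by_cases hxξ : ξ < x
      · exact le_csSup hs'b ⟨hx, hxξ⟩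
      · exact (not_lt.1 hxξ).trans ((le_csSup hs'b ⟨hy, hξy⟩).trans' hξy.le)
    have := (hC ξ).2.2 s' hsub ⟨y, hy, hξy⟩ (heq ▸ hsup)
    rwa [heq] at this

lemma fodor {S : Set Ordinal} (hS : IsStatIn κ.ord S) (g : Ordinal → Ordinal)
    (hg : ∀ α ∈ S, g α < α) : ∃ ξ, IsStatIn κ.ord {α | α ∈ S ∧ g α = ξ} := by
  by_contra h
  push_neg at h
  have h' : ∀ ξ, ∃ C, IsClubIn κ.ord C ∧ ({α | α ∈ S ∧ g α = ξ} ∩ C) = ∅ := by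
    intro ξ
    have := h ξ
    unfold IsStatIn at this
    push_neg at this
    exact this
  choose Cs hclub hempty using h'
  obtain ⟨α, hαS, hαD⟩ := hS _ (diag_club hreg hunc Cs hclub)
  have hmem : α ∈ {α | α ∈ S ∧ g α = g α} ∩ Cs (g α) := ⟨⟨hαS, rfl⟩, hαD.2 _ (hg α hαS)⟩
  exact Set.eq_empty_iff_forall_notMem.1 (hempty (g α)) α hmem

end

theorem stmt0 (κ : Cardinal) (hreg : κ.IsRegular) (hunc : ℵ₀ < κ) :
    ∃ Z : Ordinal → Set Ordinal,
      (∀ γ < κ.ord, IsStatIn κ.ord (Z γ)) ∧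
      (∀ γ < κ.ord, ∀ γ' < κ.ord, γ ≠ γ' → Disjoint (Z γ) (Z γ')) ∧
      (⋃ γ ∈ Set.Iio κ.ord, Z γ) = Set.Iio κ.ord := by
  classical
  have hΓlim : Order.IsSuccLimit κ.ord := Cardinal.isSuccLimit_ord hunc.le
  have hΓ0 : (0 : Ordinal) < κ.ord := hΓlim.pos
  have hfseq : ∀ α : Ordinal, ∃ f : ℕ → Ordinal, α.cof = ℵ₀ →
      ((∀ n, f n < α) ∧ sSup (Set.range f) = α) := by
    intro α
    by_cases h : α.cof = ℵ₀
    · exact (exists_seq_of_cof_omega h).imp fun f hf _ => hf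
    · exact ⟨fun _ => 0, fun h' => absurd h' h⟩
  choose fs hfs using hfseq
  have key : ∃ n : ℕ, ∀ β < κ.ord,
      IsStatIn κ.ord {α | (α < κ.ord ∧ α.cof = ℵ₀) ∧ β ≤ fs α n} := by
    by_contra hk
    push_neg at hk
    choose β hβΓ hnstat using hk
    have h' : ∀ n, ∃ C, IsClubIn κ.ord C ∧
        ({α | (α < κ.ord ∧ α.cof = ℵ₀) ∧ β n ≤ fs α n} ∩ C) = ∅ := by
      intro n
      have := hnstat n
      unfold IsStatIn at this
      push_neg at this
      exact this
    choose Cs hclub hempty using h'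
    have hB : sSup (Set.range β) < κ.ord := sup_nat_lt hreg hunc β hβΓ
    obtain ⟨α, hαΓ, hBα, hcof, hαC⟩ := meet_countable hreg hunc Cs hclub hB
    have hflt : ∀ n, fs α n < β n := by
      intro n
      by_contra hge
      push_neg at hge
      exact Set.eq_empty_iff_forall_notMem.1 (hempty n) α ⟨⟨⟨hαΓ, hcof⟩, hge⟩, hαC n⟩
    have hsup := (hfs α hcof).2
    have hle : α ≤ sSup (Set.range β) := by
      rw [← hsup]
      refine csSup_le' ?_
      rintro x ⟨n, rfl⟩
      exact (hflt n).le.trans (le_csSup (Ordinal.bddAbove_range _) ⟨n, rfl⟩)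
    exact absurd hle (not_le.2 hBα)
  obtain ⟨n₀, hn₀⟩ := key
  set g : Ordinal → Ordinal := fun α => fs α n₀ with hgdef
  set A : Ordinal → Set Ordinal := fun ξ => {α | (α < κ.ord ∧ α.cof = ℵ₀) ∧ g α = ξ} with hAdef
  set W : Set Ordinal := {ξ | IsStatIn κ.ord (A ξ)} with hWdef
  have hgE : ∀ α : Ordinal, α.cof = ℵ₀ → g α < α := fun α h => by
    have h2 := (hfs α h).2
    have h1 := (hfs α h).1 n₀
    exact h1
  have hWub : ∀ β < κ.ord, ∃ ξ ∈ W, β < ξ := by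
    intro β hβ
    have hβ1 : β + 1 < κ.ord := by rw [Ordinal.add_one_eq_succ]; exact hΓlim.succ_lt hβ
    have hstat := hn₀ (β + 1) hβ1
    obtain ⟨ξ, hξ⟩ := fodor hreg hunc hstat g (fun α hα => hgE α hα.1.2)
    refine ⟨ξ, stat_mono (fun x hx => ⟨hx.1.1, hx.2⟩) hξ, ?_⟩
    obtain ⟨α, hα⟩ := stat_nonempty hΓlim hξ
    calc β < β + 1 := by rw [Ordinal.add_one_eq_succ]; exact Order.lt_succ β
      _ ≤ g α := hα.1.2
      _ = ξ := hα.2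
  have hWΓ : ∀ ξ ∈ W, ξ < κ.ord := by
    intro ξ hξ
    obtain ⟨α, hα⟩ := stat_nonempty hΓlim hξ
    rw [← hα.2]
    exact (hgE α hα.1.2).trans hα.1.1
  set W' : Set Ordinal := W ∪ Set.Ici κ.ord with hW'def
  have hW' : ¬ BddAbove W' := by
    rintro ⟨b, hb⟩
    have h1 : max b κ.ord + 1 ∈ W' :=
      Or.inr ((le_max_right b κ.ord).trans le_self_add)
    have h2 := hb h1
    have h3 : b < max b κ.ord + 1 := (le_max_left b κ.ord).trans_lt
      (by rw [Ordinal.add_one_eq_succ]; exact Order.lt_succ _)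
    exact absurd h2 (not_le.2 h3)
  set e := Ordinal.enumOrd W' with hedef
  have heΓ : ∀ γ < κ.ord, e γ < κ.ord := by
    intro γ
    induction γ using Ordinal.induction with
    | h γ IH =>
      intro hγ
      have hbsup : Ordinal.bsup γ (fun δ _ => e δ) < κ.ord :=
        Ordinal.bsup_lt_ord (by rw [hreg.cof_eq]; exact Cardinal.lt_ord.1 hγ)
          (fun δ h => IH δ h (h.trans hγ))
      obtain ⟨ξ, hξW, hbξ⟩ := hWub _ hbsup
      have hle : e γ ≤ ξ := Ordinal.enumOrd_le_of_forall_lt (Or.inl hξW)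
        (fun δ hδ => (Ordinal.le_bsup _ δ hδ).trans_lt hbξ)
      exact hle.trans_lt (hWΓ ξ hξW)
  have heW : ∀ γ < κ.ord, e γ ∈ W := by
    intro γ hγ
    rcases Ordinal.enumOrd_mem hW' γ with h | h
    · exact h
    · exact absurd h (not_le.2 (heΓ γ hγ))
  have hinj : Function.Injective e := Ordinal.enumOrd_injective hW'
  have hAsub : ∀ ξ, A ξ ⊆ Set.Iio κ.ord := fun ξ x hx => hx.1.1
  refine ⟨fun γ => if γ = 0 then Set.Iio κ.ord \ ⋃ δ ∈ Set.Ioo 0 κ.ord, A (e δ)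
    else if γ < κ.ord then A (e γ) else ∅, ?_, ?_, ?_⟩
  · intro γ hγ
    beta_reduce
    by_cases h0 : γ = 0
    · subst h0
      rw [if_pos rfl]
      refine stat_mono ?_ (heW 0 hΓ0)
      intro x hx
      refine ⟨hAsub _ hx, ?_⟩
      intro hmem
      rw [Set.mem_iUnion₂] at hmem
      obtain ⟨δ, hδ, hxδ⟩ := hmem
      exact hδ.1.ne' (hinj (hxδ.2.symm.trans hx.2))
    · rw [if_neg h0, if_pos hγ]
      exact heW γ hγ
  · have hd0 : ∀ δ, 0 < δ → δ < κ.ord →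
        Disjoint (Set.Iio κ.ord \ ⋃ δ' ∈ Set.Ioo 0 κ.ord, A (e δ')) (A (e δ)) := by
      intro δ hδ0 hδΓ
      rw [Set.disjoint_left]
      intro x hx hxA
      exact hx.2 (Set.mem_biUnion ⟨hδ0, hδΓ⟩ hxA)
    intro γ hγ γ' hγ' hne
    beta_reduce
    by_cases h0 : γ = 0
    · subst h0
      rw [if_pos rfl, if_neg (Ne.symm hne), if_pos hγ']
      exact hd0 γ' (pos_iff_ne_zero.2 (Ne.symm hne)) hγ'
    · by_cases h0' : γ' = 0
      · subst h0'
        rw [if_pos rfl, if_neg h0, if_pos hγ]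
        exact (hd0 γ (pos_iff_ne_zero.2 h0) hγ).symm
      · rw [if_neg h0, if_pos hγ, if_neg h0', if_pos hγ']
        rw [Set.disjoint_left]
        intro x hx hx'
        exact hne (hinj (hx.2.symm.trans hx'.2))
  · ext x
    rw [Set.mem_iUnion₂]
    constructor
    · rintro ⟨γ, hγ, hx⟩
      beta_reduce at hx
      by_cases h0 : γ = 0
      · rw [if_pos h0] at hx; exact hx.1
      · rw [if_neg h0, if_pos (show γ < κ.ord from hγ)] at hx; exact hx.1.1
    · intro hx
      by_cases hA : ∃ δ, δ ∈ Set.Ioo 0 κ.ord ∧ x ∈ A (e δ)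
      · obtain ⟨δ, hδ, hxA⟩ := hA
        exact ⟨δ, hδ.2, by beta_reduce; rw [if_neg hδ.1.ne', if_pos hδ.2]; exact hxA⟩
      · refine ⟨0, hΓ0, ?_⟩
        beta_reduce
        rw [if_pos rfl]
        refine ⟨hx, ?_⟩
        intro hmem
        rw [Set.mem_iUnion₂] at hmem
        obtain ⟨δ, hδ, hxδ⟩ := hmem
        exact hA ⟨δ, hδ, hxδ⟩
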